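/- arXiv:1404.4315 — 2 statements merged into one kernel-verified Lean document; each statement's English description precedes it below -/
import Mathlib

section
/- Let G be a finite group of order n and let J be the augmentation ideal of the group ring (ℤ/nℤ)[G], i.e. the kernel of the augmentation map (ℤ/nℤ)[G] → ℤ/nℤ. Then H¹(G, J) is isomorphic to ℤ/nℤ. -/
open CategoryTheory Finsupp

/-- The augmentation map `k[G] → k` as a morphism of representations
from the left regular representation to the trivial representation. -/
noncomputable def augmentationHom (k : Type) (G : Type) [CommRing k] [Group G] :
    Rep.leftRegular k G ⟶ Rep.trivial k G k :=
  Rep.ofHom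
  { toLinearMap := Finsupp.linearCombination k (fun _ : G => (1 : k)) ∘ₗ
      (MonoidAlgebra.coeffLinearEquiv k).toLinearMap
    isIntertwining' := fun g => by
      ext x
      simp [Representation.ofMulAction_def] }

/-- The augmentation ideal `I_G`, i.e. the kernel of the augmentation map `k[G] → k`,
as a `G`-representation via left multiplication. -/
noncomputable def augmentationIdeal (k : Type) (G : Type) [CommRing k] [Group G] : Rep k G :=
  Limits.kernel (augmentationHom k G)

namespace AugAux

variable (k G : Type) [CommRing k] [Group G]

noncomputable abbrev ε : MonoidAlgebra k G →ₗ[k] k :=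
  Finsupp.linearCombination k (fun _ : G => (1 : k)) ∘ₗ
    (MonoidAlgebra.coeffLinearEquiv k).toLinearMap

lemma ε_ρ (g : G) (x : MonoidAlgebra k G) :
    ε k G (Representation.ofMulAction k G G g x) = ε k G x := by
  simp [Representation.ofMulAction_def, Function.comp_def]

lemma mem_ker_ρ (g : G) {x : MonoidAlgebra k G} (hx : x ∈ LinearMap.ker (ε k G)) :
    Representation.ofMulAction k G G g x ∈ LinearMap.ker (ε k G) := by
  simpa only [LinearMap.mem_ker, ε_ρ] using hx

/-- The augmentation ideal as a concrete subrepresentation. -/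
noncomputable abbrev kerRep : Rep k G :=
  Rep.of (X := LinearMap.ker (ε k G))
    { toFun := fun g => (Representation.ofMulAction k G G g).restrict
        (p := LinearMap.ker (ε k G)) (q := LinearMap.ker (ε k G))
        (fun _ hx => mem_ker_ρ k G g hx)
      map_one' := by
        ext x
        simp [LinearMap.restrict_apply]
      map_mul' := fun g h => by
        ext x
        simp [LinearMap.restrict_apply, Module.End.mul_apply] }

noncomputable def kerι : kerRep k G ⟶ Rep.leftRegular k G :=
  Rep.ofHom
  { toLinearMap := (LinearMap.ker (ε k G)).subtype
    isIntertwining' := fun g => rfl }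

lemma kerι_aug : kerι k G ≫ augmentationHom k G = 0 := by
  ext x
  exact x.2

end AugAux

namespace AugAux
variable (k G : Type) [CommRing k] [Group G]

open Limits in
noncomputable def kerIsLimit :
    Limits.IsLimit (Limits.KernelFork.ofι (kerι k G) (kerι_aug k G)) :=
  Limits.KernelFork.IsLimit.ofι _ _
    (fun {W} g hg =>
      Rep.ofHom
      { toLinearMap := LinearMap.codRestrict (LinearMap.ker (ε k G)) g.hom.toLinearMap
          (fun x => by
            have h0 := congrArg (fun f => f.hom x) hg
            simpa [augmentationHom] using h0)
        isIntertwining' := fun gg => by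
          ext x : 1
          exact Subtype.ext (Rep.hom_comm_apply g gg x) })
    (fun {W} g hg => by ext x; rfl)
    (fun {W} g hg m hm => by
      ext x w
      exact congrArg (fun f : W ⟶ Rep.leftRegular k G => (f.hom x).coeff w) hm)

noncomputable def kerIso : augmentationIdeal k G ≅ kerRep k G :=
  Limits.IsLimit.conePointUniqueUpToIso
    (Limits.kernelIsKernel (augmentationHom k G)) (kerIsLimit k G)

end AugAux

namespace AugAux

open groupCohomology

variable {k G : Type} [CommRing k] [Group G]

lemma mem_coboundaries₁_iff' {A : Rep k G} (f : G → A) :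
    f ∈ coboundaries₁ A ↔ ∃ x : A, ∀ g, A.ρ g x - x = f g := by
  simp only [coboundaries₁, LinearMap.mem_range, funext_iff, d₀₁_hom_apply]

noncomputable def H1equiv {A B : Rep k G} (e : A ≅ B) : H1 A ≃ₗ[k] H1 B :=
  ((groupCohomology.functor k G 1).mapIso e).toLinearEquiv

end AugAux

namespace AugAux

open groupCohomology Representation

variable (k G : Type) [CommRing k] [Group G] [Fintype G]

lemma ε_eq (y : MonoidAlgebra k G) : ε k G y = ∑ h : G, y.coeff h := by
  rw [LinearMap.comp_apply, Finsupp.linearCombination_apply, Finsupp.sum_fintype]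
  · simp
  · intro; simp

variable {k G}

/-- The value of a 1-cocycle of `kerRep` as a finsupp. -/
noncomputable def cval (c : cocycles₁ (kerRep k G)) (h : G) : G →₀ k :=
  ((show LinearMap.ker (ε k G) from c h) : MonoidAlgebra k G).coeff

lemma cval_add (c d : cocycles₁ (kerRep k G)) (h : G) :
    cval (c + d) h = cval c h + cval d h := rfl

lemma cval_smul (r : k) (c : cocycles₁ (kerRep k G)) (h : G) :
    cval (r • c) h = r • cval c h := rfl

lemma cval_key (c : cocycles₁ (kerRep k G)) (g w : G) :
    cval c w w = cval c (g⁻¹ * w) (g⁻¹ * w) + cval c g w := by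
  have h2 := (mem_cocycles₁_iff (c : G → kerRep k G)).1 c.2 g (g⁻¹ * w)
  rw [mul_inv_cancel_left] at h2
  have h4 : cval c w = (Representation.ofMulAction k G G g
      ((show LinearMap.ker (ε k G) from c (g⁻¹ * w)) : MonoidAlgebra k G)).coeff + cval c g :=
    congrArg (fun z => ((show LinearMap.ker (ε k G) from z) : MonoidAlgebra k G).coeff) h2
  have h5 := congrArg (fun u : G →₀ k => u w) h4
  simpa [Representation.coeff_ofMulAction, smul_eq_mul, cval] using h5

variable (k G)

/-- The map sending a 1-cocycle `c` of the augmentation ideal to `-∑ₕ (c h)(h)`. -/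
noncomputable def Φ : cocycles₁ (kerRep k G) →ₗ[k] k where
  toFun c := -∑ h : G, cval c h h
  map_add' c d := by
    simp [cval_add, Finset.sum_add_distrib]; ring
  map_smul' r c := by
    simp [cval_smul, ← Finset.mul_sum]

variable {k G}

/-- The coboundary of an arbitrary element `x` of `k[G]`, landing in the augmentation ideal. -/
noncomputable def cobFun (x : MonoidAlgebra k G) (g : G) : LinearMap.ker (ε k G) :=
  ⟨Representation.ofMulAction k G G g x - x, by
    simp only [LinearMap.mem_ker, map_sub, ε_ρ, sub_self]⟩

lemma cobFun_mem (x : MonoidAlgebra k G) : cobFun x ∈ cocycles₁ (kerRep k G) := by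
  rw [mem_cocycles₁_iff]
  intro g h
  refine Subtype.ext ?_
  show Representation.ofMulAction k G G (g * h) x - x =
    Representation.ofMulAction k G G g (Representation.ofMulAction k G G h x - x) +
      (Representation.ofMulAction k G G g x - x)
  rw [map_mul, map_sub]
  erw [Module.End.mul_apply]
  abel

lemma cval_cobFun (x : MonoidAlgebra k G) (h : cobFun x ∈ cocycles₁ (kerRep k G)) (g w : G) :
    cval ⟨cobFun x, h⟩ g w = x.coeff (g⁻¹ * w) - x.coeff w := by
  show (Representation.ofMulAction k G G g x - x).coeff w = _
  rw [MonoidAlgebra.coeff_sub, Finsupp.sub_apply, Representation.coeff_ofMulAction, smul_eq_mul]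

lemma Φ_of_cob (c : cocycles₁ (kerRep k G)) (y : MonoidAlgebra k G)
    (hc : ∀ g w, cval c g w = y.coeff (g⁻¹ * w) - y.coeff w) :
    Φ k G c = ε k G y - (Fintype.card G : k) * y.coeff 1 := by
  show -∑ h : G, cval c h h = _
  rw [show (Fintype.card G : k) = (Finset.univ.card (α := G) : k) from rfl]
  simp only [hc, inv_mul_cancel]
  rw [Finset.sum_sub_distrib, Finset.sum_const, ε_eq]
  simp only [smul_eq_mul, neg_sub]
  ring

lemma Φ_surjective (hcard : (Fintype.card G : k) = 0) :
    Function.Surjective (Φ k G) := by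
  intro r
  refine ⟨⟨cobFun (MonoidAlgebra.single 1 r), cobFun_mem _⟩, ?_⟩
  rw [Φ_of_cob _ (MonoidAlgebra.single 1 r) (cval_cobFun _ _), hcard]
  simp [ε_eq, MonoidAlgebra.coeff_single, Finsupp.single_apply]

lemma ker_Φ (hcard : (Fintype.card G : k) = 0) (c : cocycles₁ (kerRep k G)) :
    c ∈ LinearMap.ker (Φ k G) ↔ (c : G → kerRep k G) ∈ coboundaries₁ (kerRep k G) := by
  constructor
  · intro hc
    have hΦ : -∑ h : G, cval c h h = 0 := hc
    set x : MonoidAlgebra k G :=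
      MonoidAlgebra.ofCoeff (Finsupp.equivFunOnFinite.symm (fun w => - cval c w w)) with hxdef
    have hx_apply : ∀ w, x.coeff w = - cval c w w := fun w => rfl
    have hx : x ∈ LinearMap.ker (ε k G) := by
      rw [LinearMap.mem_ker, ε_eq]
      simpa [hx_apply, Finset.sum_neg_distrib] using hΦ
    refine (mem_coboundaries₁_iff' _).2 ⟨⟨x, hx⟩, fun g => ?_⟩
    refine Subtype.ext ?_
    refine MonoidAlgebra.coeff_injective ?_
    show (Representation.ofMulAction k G G g x - x).coeff = cval c g
    ext w
    rw [MonoidAlgebra.coeff_sub, Finsupp.sub_apply, Representation.coeff_ofMulAction,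
      smul_eq_mul, hx_apply, hx_apply]
    linear_combination cval_key c g w
  · intro hc
    rcases (mem_coboundaries₁_iff' _).1 hc with ⟨y, hy⟩
    rw [LinearMap.mem_ker]
    set yv : MonoidAlgebra k G := ((show LinearMap.ker (ε k G) from y : MonoidAlgebra k G))
      with hyv
    have hyval : ∀ g w, cval c g w = yv.coeff (g⁻¹ * w) - yv.coeff w := by
      intro g w
      have h4 : (Representation.ofMulAction k G G g yv - yv).coeff = cval c g :=
        congrArg (fun z => ((show LinearMap.ker (ε k G) from z) : MonoidAlgebra k G).coeff)
          (hy g)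
      have h5 := congrArg (fun u : G →₀ k => u w) h4
      simpa [Representation.coeff_ofMulAction, smul_eq_mul] using h5.symm
    rw [Φ_of_cob c yv hyval, hcard]
    have h0 : ε k G yv = 0 := (show LinearMap.ker (ε k G) from y).2
    simp [h0]

variable (k G)

noncomputable def H1kerEquiv (hcard : (Fintype.card G : k) = 0) :
    H1 (kerRep k G) ≃ₗ[k] k :=
  ((H1π (kerRep k G)).hom.quotKerEquivOfSurjective
      ((ModuleCat.epi_iff_surjective _).1 inferInstance)).symm.trans
    ((Submodule.quotEquivOfEq _ _ (by
        ext c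
        rw [LinearMap.mem_ker, ker_Φ hcard]
        exact H1π_eq_zero_iff c)).trans
      ((Φ k G).quotKerEquivOfSurjective (Φ_surjective hcard)))

end AugAux


/-- For a finite group `G` of order `n`, the first group cohomology of the augmentation
ideal `J ⊆ (ℤ/nℤ)[G]` satisfies `H¹(G, J) ≃ ℤ/nℤ`. -/
theorem h1_augmentationIdeal_zmod_iso_zmod_card (G : Type) [Group G] [Finite G]
    (n : ℕ) (hn : n = Nat.card G) :
    Nonempty ((groupCohomology (augmentationIdeal (ZMod n) G) 1) ≃+ ZMod n) := by
  subst hn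
  have : Fintype G := Fintype.ofFinite G
  have hcard : ((Fintype.card G : ZMod (Nat.card G))) = 0 := by
    rw [Nat.card_eq_fintype_card]
    exact ZMod.natCast_self _
  exact ⟨(((AugAux.H1equiv (AugAux.kerIso (ZMod (Nat.card G)) G)).trans
      (AugAux.H1kerEquiv (ZMod (Nat.card G)) G hcard))).toAddEquiv⟩
end

section
/- Let K = ℂ(x)((t)) be the field of formal Laurent series in t over the rational function field ℂ(x). Then there are no elements X₁, Y₁, X₂, Y₂, X₃, Y₃ ∈ K with (X₁² − x·Y₁²)·(X₂² − (1+x)·Y₂²)·(X₃² − x(1+x)·Y₃²) = t. -/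
open Polynomial

/-- The leading coefficient of a nonzero Hahn series is its coefficient at its order. -/
lemma aux_lc_eq {R : Type*} [Zero R] {x : HahnSeries ℤ R} (hx : x ≠ 0) :
    x.leadingCoeff = x.coeff x.order := by
  rw [HahnSeries.leadingCoeff_eq]

/-- If `p` has odd root multiplicity at some point `c`, then `p` is not a square in `ℂ(x)`. -/
lemma not_square_of_odd_rootMultiplicity (p : ℂ[X]) (c : ℂ)
    (h : Odd (p.rootMultiplicity c)) (f : RatFunc ℂ) :
    f ^ 2 ≠ algebraMap ℂ[X] (RatFunc ℂ) p := by
  intro hf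
  have hp : p ≠ 0 := by
    rintro rfl
    simp [Polynomial.rootMultiplicity_zero] at h
  have hd : f.denom ≠ 0 := f.denom_ne_zero
  have hdm : (algebraMap ℂ[X] (RatFunc ℂ)) f.denom ≠ 0 := RatFunc.algebraMap_ne_zero hd
  have hfn : f ≠ 0 := by
    rintro rfl
    exact (RatFunc.algebraMap_ne_zero hp) (by simpa using hf.symm)
  have hn : f.num ≠ 0 := RatFunc.num_ne_zero hfn
  have h0 : algebraMap ℂ[X] (RatFunc ℂ) f.num = f * algebraMap ℂ[X] (RatFunc ℂ) f.denom :=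
    (div_eq_iff hdm).mp (RatFunc.num_div_denom f)
  have key : f.num ^ 2 = p * f.denom ^ 2 := by
    apply RatFunc.algebraMap_injective ℂ
    rw [map_pow, map_mul, map_pow, h0, mul_pow, hf]
  have hmul := congrArg (Polynomial.rootMultiplicity c) key
  rw [sq, sq, Polynomial.rootMultiplicity_mul (mul_ne_zero hn hn),
    Polynomial.rootMultiplicity_mul (mul_ne_zero hp (mul_ne_zero hd hd)),
    Polynomial.rootMultiplicity_mul (mul_ne_zero hd hd)] at hmul
  obtain ⟨k, hk⟩ := h
  omega

lemma aux_rm_X : (Polynomial.X : ℂ[X]).rootMultiplicity 0 = 1 := by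
  have : (Polynomial.X : ℂ[X]) = Polynomial.X - Polynomial.C 0 := by simp
  rw [this, Polynomial.rootMultiplicity_X_sub_C_self]

lemma aux_rm_one_add_X : ((1 : ℂ[X]) + Polynomial.X).rootMultiplicity (-1) = 1 := by
  have : (1 : ℂ[X]) + Polynomial.X = Polynomial.X - Polynomial.C (-1) := by
    simp [sub_neg_eq_add, add_comm]
  rw [this, Polynomial.rootMultiplicity_X_sub_C_self]

lemma aux_one_add_X_ne_zero : ((1 : ℂ[X]) + Polynomial.X) ≠ 0 := by
  intro h
  have := congrArg (Polynomial.eval 0) h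
  simp at this

lemma aux_rm_X_mul : ((Polynomial.X : ℂ[X]) * (1 + Polynomial.X)).rootMultiplicity 0 = 1 := by
  rw [Polynomial.rootMultiplicity_mul (mul_ne_zero Polynomial.X_ne_zero aux_one_add_X_ne_zero),
    aux_rm_X, Polynomial.rootMultiplicity_eq_zero (by simp [Polynomial.IsRoot])]

/-- A value of the norm form `X² − aY²`, for `a` a constant which is not a square in `ℂ(x)`,
has even `t`-adic order. -/
lemma even_order_norm (a : RatFunc ℂ) (ha : ∀ f : RatFunc ℂ, f ^ 2 ≠ a)
    (X Y : LaurentSeries (RatFunc ℂ))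
    (hZ : X ^ 2 - HahnSeries.C a * Y ^ 2 ≠ 0) :
    Even ((X ^ 2 - HahnSeries.C a * Y ^ 2).order) := by
  have ha0 : a ≠ 0 := fun h => ha 0 (by simp [h])
  have hCa : (HahnSeries.C a : LaurentSeries (RatFunc ℂ)) ≠ 0 := by
    simpa using HahnSeries.single_ne_zero (a := (0:ℤ)) ha0
  rcases eq_or_ne Y 0 with rfl | hY
  · have hX : X ≠ 0 := by rintro rfl; simp at hZ
    simp only [ne_eq, OfNat.ofNat_ne_zero, not_false_eq_true, zero_pow, mul_zero, sub_zero]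
    rw [HahnSeries.order_pow, two_nsmul]
    exact Even.add_self _
  rcases eq_or_ne X 0 with rfl | hX
  · have h0 : (0:LaurentSeries (RatFunc ℂ)) ^ 2 - HahnSeries.C a * Y ^ 2
        = -(HahnSeries.C a * Y ^ 2) := by ring
    rw [h0, HahnSeries.order_neg, HahnSeries.order_mul hCa (pow_ne_zero _ hY),
      HahnSeries.order_C, HahnSeries.order_pow, zero_add, two_nsmul]
    exact Even.add_self _
  -- main case : both `X` and `Y` nonzero
  have hX2 : (X ^ 2).order = X.order + X.order := by
    rw [HahnSeries.order_pow, two_nsmul]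
  have hY2 : (HahnSeries.C a * Y ^ 2).order = Y.order + Y.order := by
    rw [HahnSeries.order_mul hCa (pow_ne_zero _ hY), HahnSeries.order_C,
      HahnSeries.order_pow, two_nsmul, zero_add]
  have c1 : (X ^ 2).coeff (min X.order Y.order + min X.order Y.order)
      = (X.coeff (min X.order Y.order)) ^ 2 := by
    rcases (min_le_left X.order Y.order).lt_or_eq with h | h
    · rw [HahnSeries.coeff_eq_zero_of_lt_order (by rw [hX2]; exact add_lt_add h h),
        HahnSeries.coeff_eq_zero_of_lt_order h, zero_pow two_ne_zero]
    · rw [h, sq, sq]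
      have := HahnSeries.coeff_mul_order_add_order X X
      rwa [aux_lc_eq hX] at this
  have c2 : (HahnSeries.C a * Y ^ 2).coeff (min X.order Y.order + min X.order Y.order)
      = a * (Y.coeff (min X.order Y.order)) ^ 2 := by
    rcases (min_le_right X.order Y.order).lt_or_eq with h | h
    · rw [HahnSeries.coeff_eq_zero_of_lt_order (by rw [hY2]; exact add_lt_add h h),
        HahnSeries.coeff_eq_zero_of_lt_order h, zero_pow two_ne_zero, mul_zero]
    · rw [h]
      have h2 : (Y ^ 2).coeff (Y.order + Y.order) = (Y.coeff Y.order) ^ 2 := by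
        rw [sq, sq]
        have := HahnSeries.coeff_mul_order_add_order Y Y
        rwa [aux_lc_eq hY] at this
      have := HahnSeries.coeff_mul_order_add_order (HahnSeries.C a) (Y ^ 2)
      rw [HahnSeries.order_C, HahnSeries.order_pow, two_nsmul, zero_add, aux_lc_eq hCa,
        HahnSeries.order_C, aux_lc_eq (pow_ne_zero 2 hY), HahnSeries.order_pow, two_nsmul,
        h2] at this
      rw [this]
      congr 1
      exact HahnSeries.coeff_single_same 0 a
  have hcoeff : (X ^ 2 - HahnSeries.C a * Y ^ 2).coeff
      (min X.order Y.order + min X.order Y.order)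
      = (X.coeff (min X.order Y.order)) ^ 2 - a * (Y.coeff (min X.order Y.order)) ^ 2 := by
    rw [HahnSeries.coeff_sub, c1, c2]
  have hne : (X ^ 2 - HahnSeries.C a * Y ^ 2).coeff
      (min X.order Y.order + min X.order Y.order) ≠ 0 := by
    rw [hcoeff]
    intro h
    have heq : (X.coeff (min X.order Y.order)) ^ 2
        = a * (Y.coeff (min X.order Y.order)) ^ 2 := sub_eq_zero.mp h
    rcases eq_or_ne (Y.coeff (min X.order Y.order)) 0 with hy0 | hy0
    · have hx0 : X.coeff (min X.order Y.order) = 0 := by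
        have : (X.coeff (min X.order Y.order)) ^ 2 = 0 := by rw [heq, hy0]; ring
        exact pow_eq_zero_iff two_ne_zero |>.mp this
      rcases min_cases X.order Y.order with ⟨h1, _⟩ | ⟨h1, _⟩
      · exact (HahnSeries.coeff_order_eq_zero.not.2 hX) (h1 ▸ hx0)
      · exact (HahnSeries.coeff_order_eq_zero.not.2 hY) (h1 ▸ hy0)
    · exact ha (X.coeff (min X.order Y.order) / Y.coeff (min X.order Y.order))
        (by field_simp [heq]; linear_combination heq)
  have hord : (X ^ 2 - HahnSeries.C a * Y ^ 2).order
      = min X.order Y.order + min X.order Y.order := by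
    apply le_antisymm (HahnSeries.order_le_of_coeff_ne_zero hne)
    by_contra hlt
    push_neg at hlt
    exact (HahnSeries.coeff_order_eq_zero.not.2 hZ) (by
      rw [HahnSeries.coeff_sub,
        HahnSeries.coeff_eq_zero_of_lt_order (lt_of_lt_of_le hlt (by
          rw [hX2]; exact add_le_add (min_le_left _ _) (min_le_left _ _))),
        HahnSeries.coeff_eq_zero_of_lt_order (lt_of_lt_of_le hlt (by
          rw [hY2]; exact add_le_add (min_le_right _ _) (min_le_right _ _))), sub_zero])
  rw [hord]
  exact Even.add_self _

/-- In `K = ℂ(x)((t))`, the product `(X₁² − xY₁²)(X₂² − (1+x)Y₂²)(X₃² − x(1+x)Y₃²)`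
never takes the value `t`. -/
theorem no_product_of_norms_eq_t :
    ¬ ∃ X₁ Y₁ X₂ Y₂ X₃ Y₃ : LaurentSeries (RatFunc ℂ),
      (X₁ ^ 2 - HahnSeries.C (RatFunc.X : RatFunc ℂ) * Y₁ ^ 2) *
      (X₂ ^ 2 - HahnSeries.C (1 + (RatFunc.X : RatFunc ℂ)) * Y₂ ^ 2) *
      (X₃ ^ 2 - HahnSeries.C ((RatFunc.X : RatFunc ℂ) * (1 + RatFunc.X)) * Y₃ ^ 2)
        = HahnSeries.single (1 : ℤ) (1 : RatFunc ℂ) := by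
  rintro ⟨X₁, Y₁, X₂, Y₂, X₃, Y₃, h⟩
  have hs : (HahnSeries.single (1 : ℤ) (1 : RatFunc ℂ)) ≠ 0 :=
    HahnSeries.single_ne_zero one_ne_zero
  have hprod : (X₁ ^ 2 - HahnSeries.C (RatFunc.X : RatFunc ℂ) * Y₁ ^ 2) *
      (X₂ ^ 2 - HahnSeries.C (1 + (RatFunc.X : RatFunc ℂ)) * Y₂ ^ 2) *
      (X₃ ^ 2 - HahnSeries.C ((RatFunc.X : RatFunc ℂ) * (1 + RatFunc.X)) * Y₃ ^ 2) ≠ 0 :=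
    h ▸ hs
  have h1 : (X₁ ^ 2 - HahnSeries.C (RatFunc.X : RatFunc ℂ) * Y₁ ^ 2) ≠ 0 :=
    left_ne_zero_of_mul (left_ne_zero_of_mul hprod)
  have h2 : (X₂ ^ 2 - HahnSeries.C (1 + (RatFunc.X : RatFunc ℂ)) * Y₂ ^ 2) ≠ 0 :=
    right_ne_zero_of_mul (left_ne_zero_of_mul hprod)
  have h3 : (X₃ ^ 2 - HahnSeries.C ((RatFunc.X : RatFunc ℂ) * (1 + RatFunc.X)) * Y₃ ^ 2) ≠ 0 :=
    right_ne_zero_of_mul hprod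
  have ha1 : ∀ f : RatFunc ℂ, f ^ 2 ≠ (RatFunc.X : RatFunc ℂ) := by
    intro f
    have := not_square_of_odd_rootMultiplicity Polynomial.X 0 (by rw [aux_rm_X]; exact odd_one) f
    rwa [RatFunc.algebraMap_X] at this
  have ha2 : ∀ f : RatFunc ℂ, f ^ 2 ≠ 1 + (RatFunc.X : RatFunc ℂ) := by
    intro f
    have := not_square_of_odd_rootMultiplicity (1 + Polynomial.X) (-1)
      (by rw [aux_rm_one_add_X]; exact odd_one) f
    rwa [map_add, map_one, RatFunc.algebraMap_X] at this
  have ha3 : ∀ f : RatFunc ℂ, f ^ 2 ≠ (RatFunc.X : RatFunc ℂ) * (1 + RatFunc.X) := by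
    intro f
    have := not_square_of_odd_rootMultiplicity (Polynomial.X * (1 + Polynomial.X)) 0
      (by rw [aux_rm_X_mul]; exact odd_one) f
    rwa [map_mul, map_add, map_one, RatFunc.algebraMap_X] at this
  have he1 := even_order_norm _ ha1 X₁ Y₁ h1
  have he2 := even_order_norm _ ha2 X₂ Y₂ h2
  have he3 := even_order_norm _ ha3 X₃ Y₃ h3
  have horder := congrArg HahnSeries.order h
  rw [HahnSeries.order_mul (mul_ne_zero h1 h2) h3, HahnSeries.order_mul h1 h2,
    HahnSeries.order_single one_ne_zero] at horder
  obtain ⟨k1, hk1⟩ := he1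
  obtain ⟨k2, hk2⟩ := he2
  obtain ⟨k3, hk3⟩ := he3
  omega
end
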